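/- For (e,f) ∈ Δ = {(e,f) : 0 < f < e < 1}, the billiard rotation number satisfies ρ̂(e,f) = 1/3 if and only if e² + 2ef³ − 2ef − f⁴ = 0. -/

import Mathlib

set_option maxHeartbeats 1000000


open Real

/-- Incomplete elliptic integral of the first kind `F(φ,e)`. -/
noncomputable def ellF (φ e : ℝ) : ℝ :=
  ∫ τ in (0:ℝ)..φ, 1 / Real.sqrt (1 - e ^ 2 * Real.sin τ ^ 2)

/-- Complete elliptic integral of the first kind `K(e)`. -/
noncomputable def ellK (e : ℝ) : ℝ := ellF (Real.pi / 2) e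

/-- The angle `ω̂(e,f)`. -/
noncomputable def omegaHat (e f : ℝ) : ℝ :=
  Real.arcsin (Real.sqrt ((e ^ 2 - f ^ 2) / (e ^ 2 * (1 - f ^ 2))))

/-- The billiard rotation number `ρ̂(e,f)`. -/
noncomputable def rhoHat (e f : ℝ) : ℝ := ellF (omegaHat e f) e / (2 * ellK e)

namespace PTP
lemma den_pos {e : ℝ} (he1 : e^2 < 1) (τ : ℝ) : 0 < 1 - e^2 * Real.sin τ ^ 2 := by
  nlinarith [Real.sin_sq_le_one τ, sq_nonneg e, sq_nonneg (e * Real.sin τ)]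
lemma integrand_cont {e : ℝ} (he1 : e^2 < 1) :
    Continuous fun τ => 1 / Real.sqrt (1 - e ^ 2 * Real.sin τ ^ 2) := by
  apply continuous_const.div
  · exact Real.continuous_sqrt.comp (by continuity)
  · exact fun τ => (Real.sqrt_pos.mpr (den_pos he1 τ)).ne'
lemma ellF_hasDerivAt {e : ℝ} (he1 : e^2 < 1) (x : ℝ) :
    HasDerivAt (fun φ => ellF φ e) (1 / Real.sqrt (1 - e ^ 2 * Real.sin x ^ 2)) x :=
  intervalIntegral.integral_hasDerivAt_right
    ((integrand_cont he1).intervalIntegrable _ _)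
    ((integrand_cont he1).stronglyMeasurableAtFilter _ _)
    (integrand_cont he1).continuousAt
lemma ellF_continuous {e : ℝ} (he1 : e^2 < 1) : Continuous fun φ => ellF φ e :=
  continuous_iff_continuousAt.mpr fun x => (ellF_hasDerivAt he1 x).continuousAt
lemma ellF_zero (e : ℝ) : ellF 0 e = 0 := intervalIntegral.integral_same
lemma ellF_strictMono {e : ℝ} (he1 : e^2 < 1) : StrictMono fun φ => ellF φ e := by
  intro x y hxy
  have h : ellF y e - ellF x e = ∫ τ in x..y, 1 / Real.sqrt (1 - e ^ 2 * Real.sin τ ^ 2) := by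
    rw [ellF, ellF, ← intervalIntegral.integral_interval_sub_left
      ((integrand_cont he1).intervalIntegrable 0 y) ((integrand_cont he1).intervalIntegrable 0 x)]
  have hpos : (0:ℝ) < ∫ τ in x..y, 1 / Real.sqrt (1 - e ^ 2 * Real.sin τ ^ 2) := by
    apply intervalIntegral.intervalIntegral_pos_of_pos
      ((integrand_cont he1).intervalIntegrable _ _) _ hxy
    intro τ
    exact div_pos one_pos (Real.sqrt_pos.mpr (den_pos he1 τ))
  simp only
  linarith

noncomputable def compAng (e φ : ℝ) : ℝ :=
  Real.arcsin (Real.cos φ / Real.sqrt (1 - e ^ 2 * Real.sin φ ^ 2))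

lemma comp_deriv {e φ : ℝ} (he1 : e^2 < 1) (hs : 0 < Real.sin φ) (hc : 0 < Real.cos φ) :
    HasDerivAt (fun x => ellF (compAng e x) e)
      (-(1 / Real.sqrt (1 - e ^ 2 * Real.sin φ ^ 2))) φ := by
  set s := Real.sin φ with hsdef
  set c := Real.cos φ with hcdef
  have hu0 : 0 < 1 - e^2 * s^2 := den_pos he1 φ
  set A := Real.sqrt (1 - e^2 * s^2) with hAdef
  have hA : 0 < A := Real.sqrt_pos.mpr hu0
  have hA2 : A^2 = 1 - e^2*s^2 := Real.sq_sqrt hu0.le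
  have hc2 : c^2 = 1 - s^2 := by
    rw [hcdef, hsdef, Real.cos_sq']
  set r := c / A with hrdef
  have hr0 : 0 < r := div_pos hc hA
  have hr1 : r < 1 := by
    rw [hrdef, div_lt_one hA]
    have hcA : c^2 < A^2 := by
      nlinarith [hA2, hc2, mul_pos (mul_pos hs hs) (show (0:ℝ) < 1 - e^2 by linarith)]
    exact lt_of_pow_lt_pow_left₀ 2 hA.le hcA
  -- derivative of u
  have hu : HasDerivAt (fun x => 1 - e^2 * Real.sin x^2)
      (-(e^2 * (2 * Real.sin φ ^ 1 * Real.cos φ))) φ := by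
    have h1 : HasDerivAt (fun x => Real.sin x ^ 2) (2 * Real.sin φ ^ 1 * Real.cos φ) φ :=
      (Real.hasDerivAt_sin φ).pow 2
    simpa using (h1.const_mul (e^2)).const_sub 1
  have hsq : HasDerivAt (fun x => Real.sqrt (1 - e^2 * Real.sin x^2))
      (1 / (2 * A) * -(e^2 * (2 * s ^ 1 * c))) φ :=
    (Real.hasDerivAt_sqrt hu0.ne').comp φ hu
  have hr' : HasDerivAt (fun x => Real.cos x / Real.sqrt (1 - e^2 * Real.sin x^2))
      ((-s * A - c * (1 / (2 * A) * -(e^2 * (2 * s ^ 1 * c)))) / A^2) φ :=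
    (Real.hasDerivAt_cos φ).div hsq hA.ne'
  have harc : HasDerivAt Real.arcsin (1 / Real.sqrt (1 - r^2)) r :=
    Real.hasDerivAt_arcsin (by linarith) hr1.ne
  have hcomp : HasDerivAt (fun x => compAng e x)
      (1 / Real.sqrt (1 - r^2) * ((-s * A - c * (1 / (2 * A) * -(e^2 * (2 * s ^ 1 * c)))) / A^2)) φ :=
    harc.comp φ hr'
  have hE : HasDerivAt (fun ψ => ellF ψ e)
      (1 / Real.sqrt (1 - e ^ 2 * Real.sin (compAng e φ) ^ 2)) (compAng e φ) :=
    ellF_hasDerivAt he1 (compAng e φ)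
  have htot := hE.comp φ hcomp
  refine htot.congr_deriv ?_
  symm
  -- now the algebra
  have hB0 : (0:ℝ) < 1 - e^2 := by linarith
  set B := Real.sqrt (1 - e^2) with hBdef
  have hB : 0 < B := Real.sqrt_pos.mpr hB0
  have hB2 : B^2 = 1 - e^2 := Real.sq_sqrt hB0.le
  have hsin : Real.sin (compAng e φ) = r := by
    rw [compAng]
    exact Real.sin_arcsin (by linarith) hr1.le
  rw [hsin]
  have h1r : Real.sqrt (1 - r^2) = s * B / A := by
    rw [show (1:ℝ) - r^2 = (s * B / A)^2 by
      rw [hrdef]; field_simp; nlinarith [hA2, hB2, hc2]]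
    exact Real.sqrt_sq (by positivity)
  have h2r : Real.sqrt (1 - e^2 * r^2) = B / A := by
    rw [show (1:ℝ) - e^2 * r^2 = (B / A)^2 by
      rw [hrdef]; field_simp; nlinarith [hA2, hB2, hc2]]
    exact Real.sqrt_sq (by positivity)
  rw [h1r, h2r]
  field_simp
  linear_combination hA2 - hB2 - e^2 * hc2

lemma compAng_cont {e : ℝ} (he1 : e^2 < 1) : Continuous fun x => compAng e x := by
  unfold compAng
  apply Real.continuous_arcsin.comp
  apply Continuous.div Real.continuous_cos
  · exact Real.continuous_sqrt.comp (by continuity)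
  · exact fun τ => (Real.sqrt_pos.mpr (den_pos he1 τ)).ne'

lemma ellF_compAng {e : ℝ} (he1 : e^2 < 1) {φ : ℝ} (h0 : 0 ≤ φ) (h2 : φ ≤ Real.pi/2) :
    ellF (compAng e φ) e = ellF (Real.pi/2) e - ellF φ e := by
  rcases eq_or_lt_of_le h0 with h|h
  · rw [← h]
    simp [compAng, ellF_zero, Real.arcsin_one]
  · have hcont : ContinuousOn (fun x => ellF (compAng e x) e + ellF x e)
        (Set.Icc φ (Real.pi/2)) :=
      (((ellF_continuous he1).comp (compAng_cont he1)).add (ellF_continuous he1)).continuousOn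
    have hderiv : ∀ x ∈ Set.Ico φ (Real.pi/2),
        HasDerivWithinAt (fun x => ellF (compAng e x) e + ellF x e) 0 (Set.Ici x) x := by
      intro x hx
      have hx0 : 0 < x := lt_of_lt_of_le h hx.1
      have hsx : 0 < Real.sin x :=
        Real.sin_pos_of_pos_of_lt_pi hx0 (lt_trans hx.2 (by linarith [Real.pi_pos]))
      have hcx : 0 < Real.cos x :=
        Real.cos_pos_of_mem_Ioo ⟨by linarith [Real.pi_pos], hx.2⟩
      have hd := (comp_deriv he1 hsx hcx).add (ellF_hasDerivAt he1 x)
      have : (-(1 / Real.sqrt (1 - e ^ 2 * Real.sin x ^ 2))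
          + 1 / Real.sqrt (1 - e ^ 2 * Real.sin x ^ 2)) = 0 := by ring
      rw [this] at hd
      exact hd.hasDerivWithinAt
    have key := constant_of_has_deriv_right_zero hcont hderiv (Real.pi/2)
      ⟨h2, le_refl _⟩
    have hc2 : compAng e (Real.pi/2) = 0 := by
      simp [compAng]
    rw [hc2, ellF_zero] at key
    linarith

noncomputable def dblAng (e θ : ℝ) : ℝ :=
  Real.arcsin (2 * Real.sin θ * Real.cos θ * Real.sqrt (1 - e ^ 2 * Real.sin θ ^ 2)
    / (1 - e ^ 2 * Real.sin θ ^ 4))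

lemma q_pos {e : ℝ} (he1 : e^2 < 1) (θ : ℝ) : 0 < 1 - e^2 * Real.sin θ ^ 4 := by
  have h4 : Real.sin θ ^ 4 ≤ 1 := by
    nlinarith [Real.sin_sq_le_one θ, sq_nonneg (Real.sin θ)]
  nlinarith [sq_nonneg e, h4]

lemma dbl_deriv {e θ : ℝ} (he1 : e^2 < 1) (hs : 0 ≤ Real.sin θ) (hc : 0 ≤ Real.cos θ)
    (hP : 0 < 1 - 2 * Real.sin θ ^ 2 + e^2 * Real.sin θ ^ 4) :
    HasDerivAt (fun x => ellF (dblAng e x) e)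
      (2 / Real.sqrt (1 - e ^ 2 * Real.sin θ ^ 2)) θ := by
  set s := Real.sin θ with hsdef
  set c := Real.cos θ with hcdef
  have hu0 : 0 < 1 - e^2 * s^2 := den_pos he1 θ
  have hq0 : 0 < 1 - e^2 * s^4 := q_pos he1 θ
  set A := Real.sqrt (1 - e^2 * s^2) with hAdef
  have hA : 0 < A := Real.sqrt_pos.mpr hu0
  have hA2 : A^2 = 1 - e^2*s^2 := Real.sq_sqrt hu0.le
  have hc2 : c^2 = 1 - s^2 := by rw [hcdef, hsdef, Real.cos_sq']
  set q := 1 - e^2 * s^4 with hqdef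
  set P := 1 - 2 * s^2 + e^2 * s^4 with hPdef
  set R := 1 - e^2*s^2 - e^2*s^2*c^2 with hRdef
  have hR : 0 < R := by nlinarith [sq_nonneg (s^2 - 1), sq_nonneg s, sq_nonneg (e*s*c)]
  set g := 2 * s * c * A / q with hgdef
  have hg0 : 0 ≤ g := by positivity
  have hgsq : 1 - g^2 = (P/q)^2 := by
    rw [hgdef]; field_simp; linear_combination (-4*s^2*c^2) * hA2 + (-4*s^2 + 4*e^2*s^4) * hc2
  have hg1 : g < 1 := by
    have h2 : g^2 < 1 := by nlinarith [sq_nonneg (P/q), div_pos hP hq0]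
    nlinarith
  have h1g : Real.sqrt (1 - g^2) = P/q := by
    rw [hgsq]; exact Real.sqrt_sq (by positivity)
  have hgesq : 1 - e^2 * g^2 = (R/q)^2 := by
    rw [hgdef]; field_simp; linear_combination (-4*e^2*s^2*c^2) * hA2 + (-2*e^2*s^2 + e^4*s^4 - e^4*s^4*c^2 + e^4*s^6) * hc2
  have h2g : Real.sqrt (1 - e^2 * g^2) = R/q := by
    rw [hgesq]; exact Real.sqrt_sq (by positivity)
  -- derivative of u and sqrt u
  have hu : HasDerivAt (fun x => 1 - e^2 * Real.sin x^2)
      (-(e^2 * (2 * Real.sin θ ^ 1 * Real.cos θ))) θ := by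
    have h1 : HasDerivAt (fun x => Real.sin x ^ 2) (2 * Real.sin θ ^ 1 * Real.cos θ) θ :=
      (Real.hasDerivAt_sin θ).pow 2
    simpa using (h1.const_mul (e^2)).const_sub 1
  have hsq : HasDerivAt (fun x => Real.sqrt (1 - e^2 * Real.sin x^2))
      (1 / (2 * A) * -(e^2 * (2 * s ^ 1 * c))) θ :=
    (Real.hasDerivAt_sqrt hu0.ne').comp θ hu
  -- derivative of numerator 2 sin cos sqrt(u)
  have hnum : HasDerivAt (fun x => 2 * Real.sin x * Real.cos x * Real.sqrt (1 - e^2 * Real.sin x^2))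
      ((2 * c * c + 2 * s * -s) * A + 2 * s * c * (1 / (2 * A) * -(e^2 * (2 * s ^ 1 * c)))) θ := by
    have h1 : HasDerivAt (fun x => 2 * Real.sin x * Real.cos x) (2 * c * c + 2 * s * -s) θ :=
      ((Real.hasDerivAt_sin θ).const_mul 2).mul (Real.hasDerivAt_cos θ)
    exact h1.mul hsq
  -- derivative of denominator
  have hden : HasDerivAt (fun x => 1 - e^2 * Real.sin x^4)
      (-(e^2 * (4 * Real.sin θ ^ 3 * Real.cos θ))) θ := by
    have h1 : HasDerivAt (fun x => Real.sin x ^ 4) (4 * Real.sin θ ^ 3 * Real.cos θ) θ :=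
      (Real.hasDerivAt_sin θ).pow 4
    simpa using (h1.const_mul (e^2)).const_sub 1
  have hgd : HasDerivAt (fun x => 2 * Real.sin x * Real.cos x * Real.sqrt (1 - e^2 * Real.sin x^2)
      / (1 - e^2 * Real.sin x^4))
      ((((2 * c * c + 2 * s * -s) * A + 2 * s * c * (1 / (2 * A) * -(e^2 * (2 * s ^ 1 * c)))) * q
        - 2 * s * c * A * -(e^2 * (4 * s ^ 3 * c))) / q^2) θ :=
    hnum.div hden hq0.ne'
  have harc : HasDerivAt Real.arcsin (1 / Real.sqrt (1 - g^2)) g :=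
    Real.hasDerivAt_arcsin (by linarith) hg1.ne
  have hcomp := harc.comp θ hgd
  have hE : HasDerivAt (fun ψ => ellF ψ e)
      (1 / Real.sqrt (1 - e ^ 2 * Real.sin (dblAng e θ) ^ 2)) (dblAng e θ) :=
    ellF_hasDerivAt he1 (dblAng e θ)
  have htot := hE.comp θ hcomp
  have hdbl : dblAng e θ = Real.arcsin g := by rw [dblAng]
  have htot' : HasDerivAt (fun x => ellF (dblAng e x) e)
      (1 / Real.sqrt (1 - e ^ 2 * Real.sin (dblAng e θ) ^ 2) *
        (1 / Real.sqrt (1 - g ^ 2) *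
          ((((2 * c * c + 2 * s * -s) * A + 2 * s * c * (1 / (2 * A) * -(e ^ 2 * (2 * s ^ 1 * c)))) * q -
              2 * s * c * A * -(e ^ 2 * (4 * s ^ 3 * c))) /
            q ^ 2))) θ := htot
  convert htot' using 1
  have hsin : Real.sin (dblAng e θ) = g := by
    rw [hdbl]; exact Real.sin_arcsin (by linarith) hg1.le
  rw [hsin, h1g, h2g]
  field_simp
  rw [hRdef, hPdef, hqdef, hA2, hc2]
  ring

lemma dblAng_cont {e : ℝ} (he1 : e^2 < 1) : Continuous fun x => dblAng e x := by
  unfold dblAng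
  apply Real.continuous_arcsin.comp
  apply Continuous.div
  · apply Continuous.mul (by continuity)
    exact Real.continuous_sqrt.comp (by continuity)
  · continuity
  · exact fun τ => (q_pos he1 τ).ne'

lemma ellF_dblAng {e θ : ℝ} (he1 : e^2 < 1) (h0 : 0 ≤ θ) (h2 : θ ≤ Real.pi/2)
    (hP : 0 ≤ 1 - 2 * Real.sin θ ^ 2 + e^2 * Real.sin θ ^ 4) :
    ellF (dblAng e θ) e = 2 * ellF θ e := by
  have hcont : ContinuousOn (fun x => ellF (dblAng e x) e - 2 * ellF x e) (Set.Icc 0 θ) :=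
    (((ellF_continuous he1).comp (dblAng_cont he1)).sub
      (continuous_const.mul (ellF_continuous he1))).continuousOn
  have hderiv : ∀ x ∈ Set.Ico 0 θ,
      HasDerivWithinAt (fun x => ellF (dblAng e x) e - 2 * ellF x e) 0 (Set.Ici x) x := by
    intro x hx
    have hx2 : x < Real.pi / 2 := lt_of_lt_of_le hx.2 h2
    have hx0 : 0 ≤ x := hx.1
    have hsx : 0 ≤ Real.sin x := Real.sin_nonneg_of_nonneg_of_le_pi hx0
      (by linarith [Real.pi_pos])
    have hcx : 0 ≤ Real.cos x := Real.cos_nonneg_of_mem_Icc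
      ⟨by linarith [Real.pi_pos], hx2.le⟩
    have hlt : Real.sin x < Real.sin θ := by
      apply Real.strictMonoOn_sin ⟨by linarith [Real.pi_pos], hx2.le⟩
        ⟨by linarith [Real.pi_pos], h2⟩ hx.2
    have hsθ1 : Real.sin θ ^ 2 ≤ 1 := Real.sin_sq_le_one θ
    have hsx1 : Real.sin x ^ 2 ≤ 1 := Real.sin_sq_le_one x
    have hPx : 0 < 1 - 2 * Real.sin x ^ 2 + e^2 * Real.sin x ^ 4 := by
      have hd1 : 0 < Real.sin θ ^ 2 - Real.sin x ^ 2 := by nlinarith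
      have hd2 : 0 < 2 - e^2 * (Real.sin θ ^ 2 + Real.sin x ^ 2) := by nlinarith [sq_nonneg e]
      nlinarith [mul_pos hd1 hd2]
    have hd := (dbl_deriv he1 hsx hcx hPx).sub ((ellF_hasDerivAt he1 x).const_mul 2)
    have hz : 2 / Real.sqrt (1 - e ^ 2 * Real.sin x ^ 2)
        - 2 * (1 / Real.sqrt (1 - e ^ 2 * Real.sin x ^ 2)) = 0 := by ring
    rw [hz] at hd
    exact hd.hasDerivWithinAt
  have key := constant_of_has_deriv_right_zero hcont hderiv θ ⟨h0, le_refl _⟩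
  have h00 : dblAng e 0 = 0 := by simp [dblAng]
  rw [h00, ellF_zero] at key
  linarith

lemma bridge {e θ : ℝ} (he1 : e^2 < 1) (h0 : 0 ≤ θ) (h2 : θ ≤ Real.pi/2)
    (hE : 2 * ellF θ e ≤ ellF (Real.pi/2) e) :
    0 ≤ 1 - 2 * Real.sin θ ^ 2 + e^2 * Real.sin θ ^ 4 := by
  by_contra hneg
  push_neg at hneg
  have hB0 : 0 < Real.sqrt (1 - e^2) := Real.sqrt_pos.mpr (by linarith)
  set B := Real.sqrt (1 - e^2) with hBdef
  have hB2 : B^2 = 1 - e^2 := Real.sq_sqrt (by linarith)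
  have hB1 : B ≤ 1 := by
    rw [hBdef]; exact Real.sqrt_le_one.mpr (by nlinarith [sq_nonneg e])
  set t := 1/(1+B) with htdef
  have ht0 : 0 < t := by positivity
  have ht1 : t < 1 := by rw [htdef]; rw [div_lt_one (by linarith)]; linarith
  set ss := Real.sqrt t with hssdef
  have hss0 : 0 < ss := Real.sqrt_pos.mpr ht0
  have hss2 : ss^2 = t := Real.sq_sqrt ht0.le
  have hss1 : ss < 1 := by nlinarith
  set θs := Real.arcsin ss with hθsdef
  have hsin : Real.sin θs = ss := Real.sin_arcsin (by linarith) hss1.le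
  have hθs0 : 0 ≤ θs := Real.arcsin_nonneg.mpr hss0.le
  have hθs2 : θs ≤ Real.pi/2 := Real.arcsin_le_pi_div_two ss
  have hPt : 1 - 2*t + e^2*t^2 = 0 := by
    rw [htdef]; field_simp; linear_combination hB2
  have hPs : 0 ≤ 1 - 2*Real.sin θs^2 + e^2*Real.sin θs^4 := by
    rw [hsin, show ss^4 = t^2 by rw [← hss2]; ring, hss2]; linarith
  have hc : Real.cos θs = Real.sqrt (1 - t) := by
    rw [hθsdef, Real.cos_arcsin, hss2]
  have hq0 : 0 < 1 - e^2*t^2 := by nlinarith [sq_nonneg e, sq_nonneg (e*t)]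
  have het : 0 ≤ 1 - e^2*t := by nlinarith [sq_nonneg e]
  have hnum : 2 * ss * Real.sqrt (1-t) * Real.sqrt (1 - e^2*t) = 1 - e^2*t^2 := by
    have hsq : (2 * ss * Real.sqrt (1-t) * Real.sqrt (1 - e^2*t))^2 = (1 - e^2*t^2)^2 := by
      have e1 : (Real.sqrt (1-t))^2 = 1 - t := Real.sq_sqrt (by linarith)
      have e2 : (Real.sqrt (1-e^2*t))^2 = 1 - e^2*t := Real.sq_sqrt het
      have expand : (2 * ss * Real.sqrt (1-t) * Real.sqrt (1 - e^2*t))^2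
          = 4 * ss^2 * (Real.sqrt (1-t))^2 * (Real.sqrt (1-e^2*t))^2 := by ring
      rw [expand, e1, e2, hss2]
      linear_combination (-(1 - 2*t + e^2*t^2)) * hPt
    have hl : 0 ≤ 2 * ss * Real.sqrt (1-t) * Real.sqrt (1 - e^2*t) := by positivity
    calc 2 * ss * Real.sqrt (1-t) * Real.sqrt (1 - e^2*t)
        = Real.sqrt ((2 * ss * Real.sqrt (1-t) * Real.sqrt (1 - e^2*t))^2) :=
          (Real.sqrt_sq hl).symm
      _ = Real.sqrt ((1 - e^2*t^2)^2) := by rw [hsq]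
      _ = 1 - e^2*t^2 := Real.sqrt_sq hq0.le
  have harg : 2 * Real.sin θs * Real.cos θs * Real.sqrt (1 - e ^ 2 * Real.sin θs ^ 2)
      / (1 - e ^ 2 * Real.sin θs ^ 4) = 1 := by
    rw [hsin, hc, show ss^4 = t^2 by rw [← hss2]; ring, hss2, hnum]
    field_simp
  have hdbl : dblAng e θs = Real.pi/2 := by
    rw [dblAng, harg, Real.arcsin_one]
  have hhalf : 2 * ellF θs e = ellF (Real.pi/2) e := by
    rw [← hdbl]; exact (ellF_dblAng he1 hθs0 hθs2 hPs).symm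
  -- θ > θs
  have hsθnn : 0 ≤ Real.sin θ := Real.sin_nonneg_of_nonneg_of_le_pi h0
    (by linarith [Real.pi_pos])
  have h2nd : 0 < 1 - Real.sin θ^2 * (1 - B) := by
    nlinarith [Real.sin_sq_le_one θ]
  have h1st : 1 - Real.sin θ^2 * (1+B) < 0 := by
    by_contra hge; push_neg at hge
    have hb4 : Real.sin θ^4 * B^2 = Real.sin θ^4 * (1-e^2) := by rw [hB2]
    nlinarith [mul_nonneg hge h2nd.le, hb4]
  have hst2 : ss^2 < Real.sin θ^2 := by
    rw [hss2, htdef]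
    rw [div_lt_iff₀ (by linarith)]
    linarith
  have hsθ : ss < Real.sin θ := lt_of_pow_lt_pow_left₀ 2 hsθnn hst2
  have hθθs : θs < θ := by
    by_contra hle; push_neg at hle
    have : Real.sin θ ≤ Real.sin θs := by
      rcases eq_or_lt_of_le hle with h|h
      · rw [h]
      · exact (Real.strictMonoOn_sin ⟨by linarith [Real.pi_pos], by linarith⟩
          ⟨by linarith [Real.pi_pos], hθs2⟩ h).le
    rw [hsin] at this; linarith
  have := ellF_strictMono he1 hθθs
  simp only at this
  linarith

lemma le_of_sq_le_sq' {a b : ℝ} (h : a^2 ≤ b^2) (ha : 0 ≤ a) (hb : 0 < b) : a ≤ b := by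
  nlinarith

lemma sqrt_eq_of_sq {a b : ℝ} (hb : 0 ≤ b) (h : a = b^2) : Real.sqrt a = b := by
  rw [h]; exact Real.sqrt_sq hb

lemma dblArg_le_one {e θ : ℝ} (he1 : e^2 < 1) (hs : 0 ≤ Real.sin θ) (hc : 0 ≤ Real.cos θ) :
    2 * Real.sin θ * Real.cos θ * Real.sqrt (1 - e^2 * Real.sin θ^2)
      / (1 - e^2 * Real.sin θ^4) ≤ 1 := by
  set s := Real.sin θ
  set c := Real.cos θ
  have hu0 : 0 < 1 - e^2*s^2 := den_pos he1 θ
  have hq0 : 0 < 1 - e^2*s^4 := q_pos he1 θ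
  set A := Real.sqrt (1 - e^2*s^2) with hAdef
  have hA2 : A^2 = 1 - e^2*s^2 := Real.sq_sqrt hu0.le
  have hc2 : c^2 = 1 - s^2 := Real.cos_sq' θ
  have hnum0 : 0 ≤ 2*s*c*A := by positivity
  have hsq : (2*s*c*A)^2 ≤ (1 - e^2*s^4)^2 := by
    have he' : (2*s*c*A)^2 = (1-e^2*s^4)^2 - (1 - 2*s^2 + e^2*s^4)^2 := by
      have : (2*s*c*A)^2 = 4*s^2*c^2*A^2 := by ring
      rw [this, hA2]
      linear_combination (4*s^2*(1-e^2*s^2))*hc2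
    rw [he']
    linarith [sq_nonneg (1 - 2*s^2 + e^2*s^4)]
  rw [div_le_one hq0]
  exact le_of_sq_le_sq' hsq hnum0 hq0

theorem period_three_core (e f : ℝ) (hf : 0 < f) (hfe : f < e) (he : e < 1) :
    ellF (omegaHat e f) e / (2 * ellF (Real.pi/2) e) = 1 / 3 ↔
      e ^ 2 + 2 * e * f ^ 3 - 2 * e * f - f ^ 4 = 0 := by
  have he0 : 0 < e := lt_trans hf hfe
  have hee : e^2 < 1 := by nlinarith
  have hf1 : f < 1 := lt_trans hfe he
  have hf2 : (0:ℝ) < 1 - f^2 := by nlinarith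
  have hef2 : (0:ℝ) < e^2 - f^2 := by nlinarith
  have hef4 : (0:ℝ) < e^2 - f^4 := by nlinarith
  have he2 : (0:ℝ) < 1 - e^2 := by nlinarith
  set m := (e^2 - f^2)/(e^2*(1-f^2)) with hmdef
  have hm0 : 0 < m := div_pos hef2 (by positivity)
  have hm1 : m < 1 := by
    rw [hmdef, div_lt_one (by positivity)]
    nlinarith [mul_pos (mul_pos hf hf) he2]
  set P1 := Real.sqrt (e^2 - f^2) with hP1def
  set P2 := Real.sqrt (1 - f^2) with hP2def
  set P3 := Real.sqrt (1 - e^2) with hP3def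
  have hP1 : P1^2 = e^2 - f^2 := Real.sq_sqrt hef2.le
  have hP2 : P2^2 = 1 - f^2 := Real.sq_sqrt hf2.le
  have hP3 : P3^2 = 1 - e^2 := Real.sq_sqrt he2.le
  have hP1p : 0 < P1 := Real.sqrt_pos.mpr hef2
  have hP2p : 0 < P2 := Real.sqrt_pos.mpr hf2
  have hP3p : 0 < P3 := Real.sqrt_pos.mpr he2
  set V := 2*f*P1*P2/(e^2 - f^4) with hVdef
  have hV0 : 0 ≤ V := by positivity
  set w := omegaHat e f with hwdef
  -- basic facts on w
  have hsm1 : Real.sqrt m < 1 := by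
    have := Real.sqrt_lt_sqrt hm0.le hm1
    rwa [Real.sqrt_one] at this
  have hsw : Real.sin w = Real.sqrt m := by
    rw [hwdef, omegaHat]
    exact Real.sin_arcsin (by linarith [Real.sqrt_nonneg m]) hsm1.le
  have hw0 : 0 < w := Real.arcsin_pos.mpr (Real.sqrt_pos.mpr hm0)
  have hw2 : w ≤ Real.pi/2 := Real.arcsin_le_pi_div_two _
  have hsw2 : Real.sin w^2 = m := by rw [hsw]; exact Real.sq_sqrt hm0.le
  have hcw : Real.cos w = Real.sqrt (1 - m) := by
    rw [hwdef, omegaHat, Real.cos_arcsin, Real.sq_sqrt hm0.le]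
  -- ψ
  have hfe1 : f/e < 1 := (div_lt_one he0).mpr hfe
  have hfe0 : 0 < f/e := div_pos hf he0
  set ψ := Real.arcsin (f/e) with hψdef
  have hsψ : Real.sin ψ = f/e := Real.sin_arcsin (by linarith) hfe1.le
  have hψ0 : 0 ≤ ψ := Real.arcsin_nonneg.mpr hfe0.le
  have hψ2 : ψ ≤ Real.pi/2 := Real.arcsin_le_pi_div_two _
  have hcψ : Real.cos ψ = P1/e := by
    rw [hψdef, Real.cos_arcsin]
    apply sqrt_eq_of_sq (by positivity)
    rw [div_pow, div_pow, hP1]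
    field_simp
  -- sqrt computations at w
  have hsqm : Real.sqrt m = P1/(e*P2) := by
    apply sqrt_eq_of_sq (by positivity)
    rw [div_pow, mul_pow, hP1, hP2, hmdef]
  have hsq1m : Real.sqrt (1-m) = f*P3/(e*P2) := by
    apply sqrt_eq_of_sq (by positivity)
    rw [div_pow, mul_pow, mul_pow, hP3, hP2, hmdef]
    field_simp
    ring
  have hsqem : Real.sqrt (1 - e^2*m) = P3/P2 := by
    apply sqrt_eq_of_sq (by positivity)
    rw [div_pow, hP3, hP2, hmdef]
    field_simp
    ring
  -- complement of w is ψ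
  have hcompw : compAng e w = ψ := by
    rw [compAng, hψdef]
    congr 1
    rw [hcw, hsw2, hsqem, hsq1m]
    field_simp
  have hEψ : ellF ψ e = ellF (Real.pi/2) e - ellF w e := by
    rw [← hcompw]; exact ellF_compAng hee hw0.le hw2
  -- the doubling argument at ψ equals V
  have hargψ : 2 * Real.sin ψ * Real.cos ψ * Real.sqrt (1 - e^2 * Real.sin ψ^2)
      / (1 - e^2 * Real.sin ψ^4) = V := by
    have h1 : 1 - e^2 * Real.sin ψ^2 = 1 - f^2 := by
      rw [hsψ, div_pow]; field_simp
    have h2 : 1 - e^2 * Real.sin ψ^4 = (e^2 - f^4)/e^2 := by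
      rw [hsψ, div_pow]; field_simp
    rw [h1, h2, hsψ, hcψ, ← hP2def, hVdef]
    field_simp
  -- the doubling argument at w equals V
  have hqw : 1 - e^2*m^2 = (1-e^2)*(e^2-f^4)/(e^2*(1-f^2)^2) := by
    rw [hmdef]; field_simp; ring
  have hargw : 2 * Real.sin w * Real.cos w * Real.sqrt (1 - e^2 * Real.sin w^2)
      / (1 - e^2 * Real.sin w^4) = V := by
    have h4 : Real.sin w^4 = m^2 := by rw [show Real.sin w^4 = (Real.sin w^2)^2 by ring, hsw2]
    rw [h4, hsw2, hsw, hcw, hsqm, hsq1m, hsqem, hqw, hVdef]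
    field_simp
    linear_combination (1-f^2)^2 * hP3 - (P2^2 + 1 - f^2) * (1-e^2) * hP2
  -- characterization: sin w = V ↔ poly = 0
  have hVchar : Real.sin w = V ↔ e ^ 2 + 2 * e * f ^ 3 - 2 * e * f - f ^ 4 = 0 := by
    have hXY : e^2 - f^4 + 2*e*f*(1-f^2) > 0 := by
      have h1 : 0 < e*f*(1-f^2) := by positivity
      linarith only [hef4, h1]
    have hVsq : V^2 = 4*f^2*(e^2-f^2)*(1-f^2)/(e^2-f^4)^2 := by
      rw [hVdef, div_pow, mul_pow, mul_pow, mul_pow, hP1, hP2]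
      ring
    constructor
    · intro h
      have hm_eq : m = V^2 := by rw [← hsw2, h]
      rw [hVsq, hmdef, div_eq_div_iff (by positivity) (by positivity)] at hm_eq
      have key2 : (e^2-f^2) * ((e^2 - f^4 - 2*e*f*(1-f^2)) * (e^2 - f^4 + 2*e*f*(1-f^2)))
          = (e^2-f^2) * 0 := by linear_combination hm_eq
      have key := mul_left_cancel₀ hef2.ne' key2
      rcases mul_eq_zero.mp key with h'|h'
      · linear_combination h'
      · linarith [h', hXY]
    · intro hpoly
      have hm_eq : m = V^2 := by
        rw [hVsq, hmdef, div_eq_div_iff (by positivity) (by positivity)]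
        linear_combination ((e^2-f^2)*(e^2 - f^4 + 2*e*f*(1-f^2))) * hpoly
      rw [hsw, hm_eq]
      exact Real.sqrt_sq hV0
  -- strict monotonicity facts
  have hK0 : 0 < ellF (Real.pi/2) e := by
    have := ellF_strictMono hee (show (0:ℝ) < Real.pi/2 by positivity)
    simpa [ellF_zero] using this
  have hEw0 : 0 < ellF w e := by
    have := ellF_strictMono hee hw0
    simpa [ellF_zero] using this
  have hrat : ellF w e / (2 * ellF (Real.pi/2) e) = 1/3 ↔
      3 * ellF w e = 2 * ellF (Real.pi/2) e := by
    rw [div_eq_div_iff (by positivity) (by norm_num : (3:ℝ) ≠ 0)]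
    constructor <;> intro h <;> linarith
  rw [hrat]
  constructor
  · intro h3
    have hEψval : 2 * ellF ψ e ≤ ellF (Real.pi/2) e := by
      rw [hEψ]; linarith
    have hPψ := bridge hee hψ0 hψ2 hEψval
    have hdbl := ellF_dblAng hee hψ0 hψ2 hPψ
    have hEd : ellF (dblAng e ψ) e = ellF w e := by
      rw [hdbl, hEψ]; linarith
    have heq : dblAng e ψ = w := (ellF_strictMono hee).injective hEd
    have hsinw : Real.sin w = V := by
      rw [← heq, dblAng, hargψ]
      exact Real.sin_arcsin (by linarith) (by
        rw [← hargψ]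
        exact dblArg_le_one hee (by rw [hsψ]; positivity)
          (by rw [hcψ]; positivity))
    exact hVchar.mp hsinw
  · intro hpoly
    have hsinw : Real.sin w = V := hVchar.mpr hpoly
    have harcV : Real.arcsin V = w := by
      rw [← hsinw]
      exact Real.arcsin_sin (by linarith [Real.pi_pos]) hw2
    by_cases hc1 : 2 * ellF ψ e ≤ ellF (Real.pi/2) e
    · have hPψ := bridge hee hψ0 hψ2 hc1
      have hdbl := ellF_dblAng hee hψ0 hψ2 hPψ
      have hdψ : dblAng e ψ = w := by
        rw [dblAng, hargψ, harcV]
      rw [hdψ] at hdbl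
      rw [hEψ] at hdbl
      linarith
    · push_neg at hc1
      have hEwval : 2 * ellF w e ≤ ellF (Real.pi/2) e := by
        rw [hEψ] at hc1; linarith
      have hPw := bridge hee hw0.le hw2 hEwval
      have hdbl := ellF_dblAng hee hw0.le hw2 hPw
      have hdw : dblAng e w = w := by
        rw [dblAng, hargw, harcV]
      rw [hdw] at hdbl
      linarith

end PTP

/-- on `Δ`, `ρ̂(e,f) = 1/3` iff `e² + 2ef³ − 2ef − f⁴ = 0`. -/
theorem period_three_porism (e f : ℝ) (hf : 0 < f) (hfe : f < e) (he : e < 1) :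
    rhoHat e f = 1 / 3 ↔ e ^ 2 + 2 * e * f ^ 3 - 2 * e * f - f ^ 4 = 0 := by
  rw [rhoHat, ellK]
  exact PTP.period_three_core e f hf hfe he
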